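/- Let s > 1, c > 0, and L > 0 be reals, let m ≥ 2 be a natural number. Then for every natural n ≥ 1: ∑_{k=0}^{n} binom(n,k)·(m−1)^k·exp(−c·(k·L)^s) ≤ 1 + n·exp( max_{1 ≤ k ≤ n, k ∈ ℝ} ( k + k·log(n/k) + k·log(m−1) − c·k^s·L^s ) ), and moreover this maximum is O((log n)^{s/(s−1)}) as n → ∞. -/

import Mathlib

lemma choose_bound_aux (n k : ℕ) (hk : 1 ≤ k) :
    (n.choose k : ℝ) ≤ Real.exp k * ((n : ℝ) / k) ^ k := by
  have hk0 : (0:ℝ) < k := by exact_mod_cast hk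
  have h1 : (n.choose k : ℝ) ≤ ((n:ℝ)) ^ k / (Nat.factorial k : ℝ) :=
    Nat.choose_le_pow_div k n
  have h2 : ((k:ℝ)) ^ k / (Nat.factorial k : ℝ) ≤ Real.exp k := by
    calc ((k:ℝ)) ^ k / (Nat.factorial k : ℝ) ≤ ∑ i ∈ Finset.range (k+1), (k:ℝ) ^ i / (Nat.factorial i : ℝ) := by
          refine Finset.single_le_sum (f := fun i => (k:ℝ) ^ i / (Nat.factorial i : ℝ)) (fun i _ => by positivity)
            (Finset.self_mem_range_succ k)
      _ ≤ Real.exp k := Real.sum_le_exp_of_nonneg hk0.le _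
  have h3 : ((n:ℝ)) ^ k / (Nat.factorial k : ℝ) = ((n:ℝ)/k) ^ k * (((k:ℝ)) ^ k / (Nat.factorial k : ℝ)) := by
    rw [div_pow]
    field_simp
  calc (n.choose k : ℝ) ≤ ((n:ℝ)) ^ k / (Nat.factorial k : ℝ) := h1
    _ = ((n:ℝ)/k) ^ k * (((k:ℝ)) ^ k / (Nat.factorial k : ℝ)) := h3
    _ ≤ ((n:ℝ)/k) ^ k * Real.exp k := mul_le_mul_of_nonneg_left h2 (by positivity)
    _ = Real.exp k * ((n:ℝ)/k) ^ k := by ring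

lemma key_bound_aux (s c L : ℝ) (hs : 1 < s) (hc : 0 < c) (hL : 0 < L)
    (m : ℕ) (hm : 2 ≤ m) (n : ℕ) (hn : 1 ≤ n) (x : ℝ) (hx : x ∈ Set.Icc 1 (n:ℝ)) :
    x + x * Real.log ((n : ℝ) / x) + x * Real.log ((m : ℝ) - 1) - c * x ^ s * L ^ s
      ≤ ((1/(c * L ^ s)) ^ (1/(s-1)) * (1 + Real.log ((m:ℝ)-1)) ^ (s/(s-1)) * 2 ^ (s/(s-1)))
          * (1 + (Real.log (n : ℝ)) ^ (s/(s-1))) := by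
  obtain ⟨hx1, hxn⟩ := hx
  have hs1 : (0:ℝ) < s - 1 := by linarith
  have hm1 : (1:ℝ) ≤ (m:ℝ) - 1 := by
    have : (2:ℝ) ≤ m := by exact_mod_cast hm
    linarith
  have hlogm : 0 ≤ Real.log ((m:ℝ) - 1) := Real.log_nonneg hm1
  have hx0 : (0:ℝ) < x := lt_of_lt_of_le one_pos hx1
  have hn1 : (1:ℝ) ≤ (n:ℝ) := by exact_mod_cast hn
  have hn0 : (0:ℝ) < (n:ℝ) := by linarith
  have hlogn : 0 ≤ Real.log (n:ℝ) := Real.log_nonneg hn1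
  obtain ⟨q, hq⟩ : ∃ q : ℝ, q = s / (s-1) := ⟨_, rfl⟩
  have hq0 : 0 ≤ q := by rw [hq]; positivity
  obtain ⟨b, hb⟩ : ∃ b : ℝ, b = c * L ^ s := ⟨_, rfl⟩
  have hb0 : 0 < b := by rw [hb]; exact mul_pos hc (Real.rpow_pos_of_pos hL s)
  obtain ⟨a, ha⟩ : ∃ a : ℝ, a = 1 + Real.log ((m:ℝ) - 1) := ⟨_, rfl⟩
  have ha1 : 1 ≤ a := by rw [ha]; linarith
  obtain ⟨A, hA⟩ : ∃ A : ℝ, A = a + Real.log (n:ℝ) := ⟨_, rfl⟩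
  have hA1 : 1 ≤ A := by rw [hA]; linarith
  have hA0 : 0 < A := by linarith
  -- step 1
  have step1 : x + x * Real.log ((n : ℝ) / x) + x * Real.log ((m : ℝ) - 1) - c * x ^ s * L ^ s
      ≤ x * A - b * x ^ s := by
    have h1 : Real.log ((n:ℝ)/x) ≤ Real.log (n:ℝ) :=
      Real.log_le_log (by positivity) (div_le_self hn0.le hx1)
    have h2 : x * Real.log ((n:ℝ)/x) ≤ x * Real.log (n:ℝ) :=
      mul_le_mul_of_nonneg_left h1 hx0.le
    have h3 : c * x ^ s * L ^ s = b * x ^ s := by rw [hb]; ring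
    have h4 : x * A = x + x * Real.log ((m:ℝ)-1) + x * Real.log (n:ℝ) := by
      rw [hA, ha]; ring
    rw [h4, ← h3]
    linarith
  -- step 2
  obtain ⟨K, hK⟩ : ∃ K : ℝ, K = (A/b) ^ (1/(s-1)) := ⟨_, rfl⟩
  have hAb0 : 0 < A / b := div_pos hA0 hb0
  have hK0 : 0 < K := by rw [hK]; exact Real.rpow_pos_of_pos hAb0 _
  have hKs : K ^ (s-1) = A / b := by
    rw [hK, ← Real.rpow_mul hAb0.le, one_div, inv_mul_cancel₀ hs1.ne', Real.rpow_one]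
  have step2 : x * A - b * x ^ s ≤ K * A := by
    rcases le_total x K with h | h
    · have h1 : x * A ≤ K * A := mul_le_mul_of_nonneg_right h hA0.le
      have h2 : (0:ℝ) ≤ b * x ^ s := by positivity
      linarith
    · have h1 : K ^ (s-1) ≤ x ^ (s-1) := Real.rpow_le_rpow hK0.le h hs1.le
      have h3 : A / b ≤ x ^ (s-1) := by rw [← hKs]; exact h1
      have hexp : s - 1 + 1 = s := by ring
      have h2 : x ^ s = x ^ (s-1) * x := by
        nth_rewrite 1 [← hexp]
        rw [Real.rpow_add_one hx0.ne']
      have h4 : x * A ≤ b * x ^ s := by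
        rw [h2]
        calc x * A = b * (x * (A/b)) := by field_simp
          _ ≤ b * (x * x ^ (s-1)) :=
              mul_le_mul_of_nonneg_left (mul_le_mul_of_nonneg_left h3 hx0.le) hb0.le
          _ = b * (x ^ (s-1) * x) := by ring
      have h5 : (0:ℝ) ≤ K * A := by positivity
      linarith
  -- step 3
  have hKA : K * A = (1/b) ^ ((1:ℝ)/(s-1)) * A ^ q := by
    have e1 : A / b = A * (1/b) := by ring
    rw [hK, e1, Real.mul_rpow hA0.le (by positivity)]
    have e2 : (1:ℝ)/(s-1) + 1 = q := by rw [hq]; field_simp; ring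
    calc A ^ ((1:ℝ)/(s-1)) * (1/b) ^ ((1:ℝ)/(s-1)) * A
        = (1/b) ^ ((1:ℝ)/(s-1)) * (A ^ ((1:ℝ)/(s-1)) * A) := by ring
      _ = (1/b) ^ ((1:ℝ)/(s-1)) * A ^ q := by
          rw [← Real.rpow_add_one hA0.ne', e2]
  have hA_le : A ≤ a * (1 + Real.log (n:ℝ)) := by nlinarith
  have hAq : A ^ q ≤ a ^ q * (1 + Real.log (n:ℝ)) ^ q := by
    calc A ^ q ≤ (a * (1 + Real.log (n:ℝ))) ^ q := Real.rpow_le_rpow hA0.le hA_le hq0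
      _ = a ^ q * (1 + Real.log (n:ℝ)) ^ q := Real.mul_rpow (by linarith) (by linarith)
  have h2q : (0:ℝ) ≤ (2:ℝ) ^ q := Real.rpow_nonneg (by norm_num) q
  have hlognq : 0 ≤ (Real.log (n:ℝ)) ^ q := Real.rpow_nonneg hlogn q
  have h1q : (1 + Real.log (n:ℝ)) ^ q ≤ 2 ^ q * (1 + (Real.log (n:ℝ)) ^ q) := by
    rcases le_total (Real.log (n:ℝ)) 1 with h | h
    · have h2 : (1 + Real.log (n:ℝ)) ^ q ≤ 2 ^ q :=
        Real.rpow_le_rpow (by linarith) (by linarith) hq0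
      have h4 : (2:ℝ) ^ q * (1 + (Real.log (n:ℝ)) ^ q) = 2 ^ q + 2 ^ q * (Real.log (n:ℝ)) ^ q := by
        ring
      linarith [mul_nonneg h2q hlognq]
    · have h2 : (1 + Real.log (n:ℝ)) ^ q ≤ (2 * Real.log (n:ℝ)) ^ q :=
        Real.rpow_le_rpow (by linarith) (by linarith) hq0
      have h3 : (2 * Real.log (n:ℝ)) ^ q = 2 ^ q * (Real.log (n:ℝ)) ^ q :=
        Real.mul_rpow (by norm_num) hlogn
      have h4 : (2:ℝ) ^ q * (1 + (Real.log (n:ℝ)) ^ q) = 2 ^ q + 2 ^ q * (Real.log (n:ℝ)) ^ q := by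
        ring
      linarith
  have hbinv : (0:ℝ) ≤ (1/b) ^ ((1:ℝ)/(s-1)) := Real.rpow_nonneg (by positivity) _
  have haq : (0:ℝ) ≤ a ^ q := Real.rpow_nonneg (by linarith) q
  have final : x + x * Real.log ((n : ℝ) / x) + x * Real.log ((m : ℝ) - 1) - c * x ^ s * L ^ s
      ≤ ((1/b) ^ ((1:ℝ)/(s-1)) * a ^ q * 2 ^ q) * (1 + (Real.log (n : ℝ)) ^ q) := by
    calc x + x * Real.log ((n : ℝ) / x) + x * Real.log ((m : ℝ) - 1) - c * x ^ s * L ^ s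
        ≤ x * A - b * x ^ s := step1
      _ ≤ K * A := step2
      _ = (1/b) ^ ((1:ℝ)/(s-1)) * A ^ q := hKA
      _ ≤ (1/b) ^ ((1:ℝ)/(s-1)) * (a ^ q * (2 ^ q * (1 + (Real.log (n:ℝ)) ^ q))) := by
          refine mul_le_mul_of_nonneg_left ?_ hbinv
          calc A ^ q ≤ a ^ q * (1 + Real.log (n:ℝ)) ^ q := hAq
            _ ≤ a ^ q * (2 ^ q * (1 + (Real.log (n:ℝ)) ^ q)) :=
                mul_le_mul_of_nonneg_left h1q haq
      _ = ((1/b) ^ ((1:ℝ)/(s-1)) * a ^ q * 2 ^ q) * (1 + (Real.log (n : ℝ)) ^ q) := by ring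
  rw [hb, ha, hq] at final
  exact final

theorem stmt_17 (s c L : ℝ) (hs : 1 < s) (hc : 0 < c) (hL : 0 < L)
    (m : ℕ) (hm : 2 ≤ m) :
    (∀ n : ℕ, 1 ≤ n →
      ∑ k ∈ Finset.range (n + 1),
          (n.choose k : ℝ) * ((m : ℝ) - 1) ^ k * Real.exp (-c * ((k : ℝ) * L) ^ s)
        ≤ 1 + (n : ℝ) * Real.exp (sSup
            ((fun k : ℝ => k + k * Real.log ((n : ℝ) / k)
                + k * Real.log ((m : ℝ) - 1) - c * k ^ s * L ^ s) ''
              Set.Icc 1 (n : ℝ)))) ∧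
    ∃ C : ℝ, ∀ n : ℕ, 1 ≤ n →
      sSup ((fun k : ℝ => k + k * Real.log ((n : ℝ) / k)
              + k * Real.log ((m : ℝ) - 1) - c * k ^ s * L ^ s) ''
            Set.Icc 1 (n : ℝ))
        ≤ C * (1 + (Real.log (n : ℝ)) ^ (s / (s - 1))) := by
  have hm1 : (1:ℝ) ≤ (m:ℝ) - 1 := by
    have : (2:ℝ) ≤ m := by exact_mod_cast hm
    linarith
  have hm0 : (0:ℝ) < (m:ℝ) - 1 := by linarith
  have hbdd : ∀ n : ℕ, 1 ≤ n → BddAbove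
      ((fun k : ℝ => k + k * Real.log ((n : ℝ) / k)
          + k * Real.log ((m : ℝ) - 1) - c * k ^ s * L ^ s) '' Set.Icc 1 (n : ℝ)) := by
    intro n hn
    refine ⟨((1/(c * L ^ s)) ^ (1/(s-1)) * (1 + Real.log ((m:ℝ)-1)) ^ (s/(s-1)) * 2 ^ (s/(s-1)))
        * (1 + (Real.log (n : ℝ)) ^ (s/(s-1))), ?_⟩
    rintro y ⟨x, hx, rfl⟩
    exact key_bound_aux s c L hs hc hL m hm n hn x hx
  constructor
  · intro n hn
    have hn1 : (1:ℝ) ≤ (n:ℝ) := by exact_mod_cast hn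
    have hn0 : (0:ℝ) < (n:ℝ) := by linarith
    have hterm : ∀ k : ℕ, 1 ≤ k → k ≤ n →
        (n.choose k : ℝ) * ((m : ℝ) - 1) ^ k * Real.exp (-c * ((k : ℝ) * L) ^ s)
          ≤ Real.exp (sSup
            ((fun k : ℝ => k + k * Real.log ((n : ℝ) / k)
                + k * Real.log ((m : ℝ) - 1) - c * k ^ s * L ^ s) ''
              Set.Icc 1 (n : ℝ))) := by
      intro k hk1 hkn
      have hk0 : (0:ℝ) < k := by exact_mod_cast hk1
      have hmem : (k:ℝ) ∈ Set.Icc 1 (n:ℝ) := ⟨by exact_mod_cast hk1, by exact_mod_cast hkn⟩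
      have hfM : (k:ℝ) + (k:ℝ) * Real.log ((n : ℝ) / k)
            + (k:ℝ) * Real.log ((m : ℝ) - 1) - c * (k:ℝ) ^ s * L ^ s
          ≤ sSup ((fun k : ℝ => k + k * Real.log ((n : ℝ) / k)
                + k * Real.log ((m : ℝ) - 1) - c * k ^ s * L ^ s) '' Set.Icc 1 (n : ℝ)) :=
        le_csSup (hbdd n hn) ⟨(k:ℝ), hmem, rfl⟩
      refine le_trans ?_ (Real.exp_le_exp.2 hfM)
      have e1 : ((k:ℝ) * L) ^ s = (k:ℝ) ^ s * L ^ s := Real.mul_rpow hk0.le hL.le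
      have e3 : Real.exp ((k:ℝ) + (k:ℝ) * Real.log ((n : ℝ) / k)
            + (k:ℝ) * Real.log ((m : ℝ) - 1) - c * (k:ℝ) ^ s * L ^ s)
          = Real.exp k * ((n:ℝ)/k) ^ k * ((m:ℝ)-1) ^ k * Real.exp (-c * ((k:ℝ) * L) ^ s) := by
        rw [show (k:ℝ) + (k:ℝ) * Real.log ((n : ℝ) / k)
              + (k:ℝ) * Real.log ((m : ℝ) - 1) - c * (k:ℝ) ^ s * L ^ s
            = (k:ℝ) + (k:ℝ) * Real.log ((n : ℝ) / k)
              + ((k:ℝ) * Real.log ((m : ℝ) - 1) + (-c * ((k:ℝ) * L) ^ s)) from by rw [e1]; ring,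
          Real.exp_add, Real.exp_add, Real.exp_add, Real.exp_nat_mul, Real.exp_nat_mul,
          Real.exp_log (div_pos hn0 hk0), Real.exp_log hm0]
        ring
      rw [e3]
      have hcb := choose_bound_aux n k hk1
      have h5 : (n.choose k : ℝ) * ((m : ℝ) - 1) ^ k
          ≤ (Real.exp k * ((n:ℝ)/k) ^ k) * ((m : ℝ) - 1) ^ k :=
        mul_le_mul_of_nonneg_right hcb (by positivity)
      calc (n.choose k : ℝ) * ((m : ℝ) - 1) ^ k * Real.exp (-c * ((k : ℝ) * L) ^ s)
          ≤ (Real.exp k * ((n:ℝ)/k) ^ k) * ((m : ℝ) - 1) ^ k * Real.exp (-c * ((k : ℝ) * L) ^ s) :=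
            mul_le_mul_of_nonneg_right h5 (Real.exp_nonneg _)
        _ = Real.exp k * ((n:ℝ)/k) ^ k * ((m:ℝ)-1) ^ k * Real.exp (-c * ((k:ℝ) * L) ^ s) := by
            ring
    rw [Finset.sum_range_succ']
    have h0 : (n.choose 0 : ℝ) * ((m : ℝ) - 1) ^ 0 * Real.exp (-c * (((0:ℕ) : ℝ) * L) ^ s) = 1 := by
      have hs0 : s ≠ 0 := by linarith
      simp [Real.zero_rpow hs0]
    rw [h0]
    refine le_trans (add_le_add_left (Finset.sum_le_sum
      (fun i hi => hterm (i+1) (Nat.le_add_left 1 i) (Nat.succ_le_of_lt (Finset.mem_range.1 hi)))) 1) ?_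
    rw [Finset.sum_const, Finset.card_range, nsmul_eq_mul]
    linarith
  · refine ⟨(1/(c * L ^ s)) ^ (1/(s-1)) * (1 + Real.log ((m:ℝ)-1)) ^ (s/(s-1)) * 2 ^ (s/(s-1)),
      fun n hn => ?_⟩
    refine csSup_le ?_ ?_
    · exact (Set.nonempty_Icc.2 (by exact_mod_cast hn)).image _
    · rintro y ⟨x, hx, rfl⟩
      exact key_bound_aux s c L hs hc hL m hm n hn x hx
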